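/- Sub-linear convergence rate of the loss-weighted gradient flow (Proposition 1, weak form): assume each ℓ_i is nonnegative and there is θ* ∈ E with ℓ_i(θ*) = 0 for every i (so L̂_n(θ*) = 0). Let θ : [0,∞) → E be continuously differentiable with ∑_{j=1}^n ℓ_j(θ(u)) > 0 for all u ≥ 0 and θ′(u) = −∑_{i=1}^n p_i(u)·∇ℓ_i(θ(u)) where p_i(u) = ℓ_i(θ(u)) / ∑_{j=1}^n ℓ_j(θ(u)). Then for every S > 0, (1/S)·∫₀^S L̂_n(θ(u)) du ≤ ‖θ(0) − θ*‖² / (2·S). -/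

import Mathlib

open scoped RealInnerProductSpace
open Set MeasureTheory intervalIntegral

/-- First-order condition for convex differentiable functions. -/
lemma convex_gradient_ineq {E : Type*} [NormedAddCommGroup E] [InnerProductSpace ℝ E]
    [CompleteSpace E] {f : E → ℝ} {G x : E} (y : E)
    (hconv : ConvexOn ℝ Set.univ f) (hf : HasGradientAt f G x) :
    ⟪G, y - x⟫ ≤ f y - f x := by
  have hc : ∀ t : ℝ, HasDerivAt (fun t : ℝ => t • (y - x) + x) (y - x) t := fun t => by
    simpa using ((hasDerivAt_id t).smul_const (y - x)).add_const x
  have hφconv : ConvexOn ℝ Set.univ (fun t : ℝ => f (t • (y - x) + x)) := by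
    have h := hconv.comp_affineMap (AffineMap.lineMap x y)
    have heq : (f ∘ ⇑(AffineMap.lineMap x y)) = fun t : ℝ => f (t • (y - x) + x) := by
      funext t; simp [AffineMap.lineMap_apply]
    simpa [heq] using h
  have hφ : HasDerivAt (fun t : ℝ => f (t • (y - x) + x)) ⟪G, y - x⟫ 0 := by
    have hF : HasFDerivAt f (InnerProductSpace.toDual ℝ E G) x :=
      hasGradientAt_iff_hasFDerivAt.mp hf
    have := hF.comp_hasDerivAt_of_eq 0 (hc 0) (by simp)
    exact this
  have hs := hφconv.le_slope_of_hasDerivAt (Set.mem_univ (0:ℝ)) (Set.mem_univ (1:ℝ))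
    one_pos hφ
  simpa [slope_def_field] using hs

theorem loss_weighted_gradient_flow_sublinear_rate
    {E : Type*} [NormedAddCommGroup E] [InnerProductSpace ℝ E] [CompleteSpace E]
    (n : ℕ) (hn : 1 ≤ n) (ℓ : Fin n → E → ℝ) (g : Fin n → E → E)
    (hconv : ∀ i, ConvexOn ℝ Set.univ (ℓ i))
    (hgrad : ∀ i x, HasGradientAt (ℓ i) (g i x) x)
    (hnn : ∀ i x, 0 ≤ ℓ i x)
    (θs : E) (hzero : ∀ i, ℓ i θs = 0)
    (θ : ℝ → E)
    (hpos : ∀ u : ℝ, 0 ≤ u → 0 < ∑ j, ℓ j (θ u))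
    (hθ : ∀ u : ℝ, 0 ≤ u →
      HasDerivAt θ (-(∑ i, (ℓ i (θ u) / ∑ j, ℓ j (θ u)) • g i (θ u))) u)
    (hC1 : ContinuousOn
      (fun u => -(∑ i, (ℓ i (θ u) / ∑ j, ℓ j (θ u)) • g i (θ u))) (Set.Ici 0)) :
    ∀ S : ℝ, 0 < S →
      (1 / S) * ∫ u in (0:ℝ)..S, (1 / (n : ℝ)) * ∑ i, ℓ i (θ u) ≤
        ‖θ 0 - θs‖ ^ 2 / (2 * S) := by
  intro S hS
  have hn0 : (0:ℝ) < n := by exact_mod_cast hn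
  set c : ℝ → E := fun u => -(∑ i, (ℓ i (θ u) / ∑ j, ℓ j (θ u)) • g i (θ u)) with hcdef
  set D : ℝ → ℝ := fun u => ⟪c u, θ u - θs⟫ with hDdef
  -- key pointwise inequality
  have key : ∀ u : ℝ, 0 ≤ u → (1 / (n:ℝ)) * ∑ i, ℓ i (θ u) ≤ -D u := by
    intro u hu
    have hTpos : 0 < ∑ j, ℓ j (θ u) := hpos u hu
    set T := ∑ j, ℓ j (θ u) with hT
    have h1 : ∀ i, ℓ i (θ u) ≤ ⟪g i (θ u), θ u - θs⟫ := by
      intro i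
      have h := convex_gradient_ineq θs (hconv i) (hgrad i (θ u))
      rw [hzero i] at h
      have h2 : ⟪g i (θ u), θs - θ u⟫ = -⟪g i (θ u), θ u - θs⟫ := by
        rw [← neg_sub, inner_neg_right]
      rw [h2] at h; linarith
    have hinner : D u = -∑ i, (ℓ i (θ u) / T) * ⟪g i (θ u), θ u - θs⟫ := by
      simp [hDdef, hcdef, inner_neg_left, sum_inner, real_inner_smul_left]
      rfl
    have hA : ∑ i, (ℓ i (θ u) / T) * ℓ i (θ u)
        ≤ ∑ i, (ℓ i (θ u) / T) * ⟪g i (θ u), θ u - θs⟫ :=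
      Finset.sum_le_sum fun i _ =>
        mul_le_mul_of_nonneg_left (h1 i) (div_nonneg (hnn i (θ u)) hTpos.le)
    have hcs : T ^ 2 ≤ (n:ℝ) * ∑ i, (ℓ i (θ u)) ^ 2 := by
      have := sq_sum_le_card_mul_sum_sq (s := Finset.univ) (f := fun i => ℓ i (θ u))
      simpa [hT] using this
    have hsum_eq : ∑ i, (ℓ i (θ u) / T) * ℓ i (θ u) = (∑ i, (ℓ i (θ u)) ^ 2) / T := by
      rw [Finset.sum_div]
      exact Finset.sum_congr rfl fun i _ => by ring
    have hB : (1 / (n:ℝ)) * T ≤ ∑ i, (ℓ i (θ u) / T) * ℓ i (θ u) := by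
      rw [hsum_eq, le_div_iff₀ hTpos]
      calc (1 / (n:ℝ)) * T * T = T ^ 2 / n := by ring
        _ ≤ ∑ i, (ℓ i (θ u)) ^ 2 := by rw [div_le_iff₀ hn0]; nlinarith [hcs]
    have hlast : (1 / (n:ℝ)) * ∑ i, ℓ i (θ u) = (1 / (n:ℝ)) * T := by rw [hT]
    rw [hlast, hinner]
    linarith
  -- continuity facts
  have hθcont : ContinuousOn θ (Ici 0) := fun u hu =>
    ((hθ u hu).continuousAt).continuousWithinAt
  have hsub : Icc (0:ℝ) S ⊆ Ici 0 := Icc_subset_Ici_self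
  have hDcont : ContinuousOn D (Icc 0 S) := by
    exact ContinuousOn.inner (hC1.mono hsub)
      (((hθcont.mono hsub)).sub continuousOn_const)
  have hintD : IntervalIntegrable D volume 0 S := by
    apply ContinuousOn.intervalIntegrable
    rwa [uIcc_of_le hS.le]
  have hℓcont : ∀ i, Continuous (ℓ i) := fun i =>
    continuous_iff_continuousAt.mpr fun x => (hgrad i x).continuousAt
  have hLcont : ContinuousOn (fun u => (1 / (n:ℝ)) * ∑ i, ℓ i (θ u)) (Icc 0 S) :=
    continuousOn_const.mul <| continuousOn_finset_sum _ fun i _ =>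
      (hℓcont i).comp_continuousOn (hθcont.mono hsub)
  have hintL : IntervalIntegrable (fun u => (1 / (n:ℝ)) * ∑ i, ℓ i (θ u)) volume 0 S := by
    apply ContinuousOn.intervalIntegrable
    rwa [uIcc_of_le hS.le]
  -- derivative of squared distance
  have hW : ∀ u ∈ uIcc (0:ℝ) S,
      HasDerivAt (fun v => ⟪θ v - θs, θ v - θs⟫) (2 * D u) u := by
    intro u hu
    rw [uIcc_of_le hS.le] at hu
    have hd : HasDerivAt (fun v => θ v - θs) (c u) u := (hθ u hu.1).sub_const θs
    have := HasDerivAt.inner ℝ hd hd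
    simpa [hDdef, real_inner_comm, two_mul] using this
  have hftc : ∫ u in (0:ℝ)..S, 2 * D u
      = ⟪θ S - θs, θ S - θs⟫ - ⟪θ 0 - θs, θ 0 - θs⟫ :=
    intervalIntegral.integral_eq_sub_of_hasDerivAt hW (hintD.const_mul 2)
  have hintDval : ∫ u in (0:ℝ)..S, D u
      = (⟪θ S - θs, θ S - θs⟫ - ⟪θ 0 - θs, θ 0 - θs⟫) / 2 := by
    rw [← hftc, intervalIntegral.integral_const_mul]; ring
  have hmono : ∫ u in (0:ℝ)..S, (1 / (n:ℝ)) * ∑ i, ℓ i (θ u)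
      ≤ ∫ u in (0:ℝ)..S, -D u :=
    intervalIntegral.integral_mono_on hS.le hintL hintD.neg fun u hu => key u hu.1
  have hWSnn : (0:ℝ) ≤ ⟪θ S - θs, θ S - θs⟫ := real_inner_self_nonneg
  have hIle : ∫ u in (0:ℝ)..S, (1 / (n:ℝ)) * ∑ i, ℓ i (θ u)
      ≤ ‖θ 0 - θs‖ ^ 2 / 2 := by
    have hnegD : ∫ u in (0:ℝ)..S, -D u = -(∫ u in (0:ℝ)..S, D u) :=
      intervalIntegral.integral_neg
    have hW0 : ⟪θ 0 - θs, θ 0 - θs⟫ = ‖θ 0 - θs‖ ^ 2 :=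
      real_inner_self_eq_norm_sq _
    rw [hnegD, hintDval, hW0] at hmono
    linarith
  calc (1 / S) * ∫ u in (0:ℝ)..S, (1 / (n : ℝ)) * ∑ i, ℓ i (θ u)
      ≤ (1 / S) * (‖θ 0 - θs‖ ^ 2 / 2) :=
        mul_le_mul_of_nonneg_left hIle (by positivity)
    _ = ‖θ 0 - θs‖ ^ 2 / (2 * S) := by ring
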